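/- Let R be a 0-dimensional affine K-algebra such that K is quasi-perfect for R. Then the map φ : R^× → (1 + Rad(0)) × (R^sep)^× defined by r ↦ (r·(r^sep)^{-1}, r^sep) is a group isomorphism, where r^sep denotes the separable part of r. -/

import Mathlib

/-- Let `R` be a 0-dimensional affine `K`-algebra with `K` quasi-perfect for `R`.
Let `S = R^sep` be the subalgebra of separable elements, `sep : R → R` the map sending
each element to its separable part (so `a - sep a` lies in the nilradical), and `N` the
subgroup `1 + Rad(0)` of `Rˣ`. Then the map `φ : Rˣ → (1 + Rad(0)) × (R^sep)ˣ` given by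
`r ↦ (r·(r^sep)⁻¹, r^sep)` is a group isomorphism. -/
theorem units_iso_one_add_rad_prod_sep_units {K R : Type*} [Field K] [CommRing R]
    [Algebra K R] [FiniteDimensional K R]
    (hqp : ∀ a : R, ∃ g : Polynomial K, g.Separable ∧ g ∣ minpoly K a ∧
      minpoly K a ∣ g ^ (minpoly K a).natDegree)
    (S : Subalgebra K R) (hS : ∀ a : R, a ∈ S ↔ (minpoly K a).Separable)
    (sep : R → R) (hsep₁ : ∀ a : R, sep a ∈ S) (hsep₂ : ∀ a : R, a - sep a ∈ nilradical R)
    (N : Subgroup Rˣ) (hN : ∀ u : Rˣ, u ∈ N ↔ ((u : R) - 1) ∈ nilradical R) :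
    ∃ φ : Rˣ ≃* N × Sˣ,
      ∀ r : Rˣ, ((((φ r).2 : S) : R) = sep (r : R)) ∧
        ((((φ r).1 : Rˣ) : R) * sep (r : R) = (r : R)) := by
  classical
  -- elements of S that are nilpotent are zero
  have key : ∀ a : R, a ∈ S → IsNilpotent a → a = 0 := by
    rintro a haS ⟨n, hn⟩
    rcases Nat.eq_zero_or_pos n with rfl | hn0
    · have h10 : (1 : R) = 0 := by simpa using hn
      rw [← mul_one a, h10, mul_zero]
    have hsepa : (minpoly K a).Separable := (hS a).mp haS
    have hdvd : minpoly K a ∣ Polynomial.X ^ n := minpoly.dvd K a (by simp [hn])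
    have hdvdX : minpoly K a ∣ Polynomial.X :=
      (hsepa.squarefree.dvd_pow_iff_dvd hn0.ne').mp hdvd
    obtain ⟨q, hq⟩ := hdvdX
    have h := congrArg (Polynomial.aeval a) hq
    simpa [minpoly.aeval] using h
  -- uniqueness of the separable part
  have uniq : ∀ a x : R, x ∈ S → a - x ∈ nilradical R → sep a = x := by
    intro a x hx hnil
    have h1 : sep a - x ∈ S := S.sub_mem (hsep₁ a) hx
    have h2 : IsNilpotent (sep a - x) := by
      have he : sep a - x = (a - x) - (a - sep a) := by ring
      rw [he]
      exact mem_nilradical.mp ((nilradical R).sub_mem hnil (hsep₂ a))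
    exact sub_eq_zero.mp (key _ h1 h2)
  haveI : FiniteDimensional K S :=
    FiniteDimensional.of_injective (S.val.toLinearMap) Subtype.val_injective
  -- an element of S that is a unit in R is a unit in S
  have unitS : ∀ s : S, IsUnit (s : R) → IsUnit s := by
    intro s hs
    have hinj : Function.Injective (LinearMap.mulLeft K s) := by
      intro x y hxy
      have h : (s : R) * (x : R) = (s : R) * (y : R) := by
        exact_mod_cast congrArg (Subtype.val) hxy
      exact Subtype.ext (hs.mul_left_cancel h)
    obtain ⟨t, ht⟩ := LinearMap.injective_iff_surjective.mp hinj 1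
    exact isUnit_iff_exists_inv.mpr ⟨t, ht⟩
  -- separable part of a unit is a unit
  have sepUnit : ∀ r : Rˣ, IsUnit (sep (r : R)) := by
    intro r
    have he : sep (r : R) = -((r : R) - sep (r : R)) + (r : R) := by ring
    rw [he]
    exact ((mem_nilradical.mp (hsep₂ (r : R))).neg).isUnit_add_right_of_commute
      r.isUnit (Commute.all _ _)
  set U : Rˣ → Rˣ := fun r => (sepUnit r).unit with hUdef
  have hU : ∀ r : Rˣ, ((U r : Rˣ) : R) = sep (r : R) := fun r => (sepUnit r).unit_spec
  set T : Rˣ → Sˣ := fun r =>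
    (unitS ⟨sep (r : R), hsep₁ _⟩ (by simpa using sepUnit r)).unit with hTdef
  have hT : ∀ r : Rˣ, (((T r : Sˣ) : S) : R) = sep (r : R) := by
    intro r
    have := (unitS ⟨sep (r : R), hsep₁ _⟩ (by simpa using sepUnit r)).unit_spec
    exact congrArg Subtype.val this
  have hmemN : ∀ r : Rˣ, r * (U r)⁻¹ ∈ N := by
    intro r
    rw [hN]
    have h1 : sep (r : R) * ((U r)⁻¹ : Rˣ) = 1 := by
      rw [← hU]; exact_mod_cast Units.mul_inv (U r)
    have he : ((r * (U r)⁻¹ : Rˣ) : R) - 1 = ((r : R) - sep (r : R)) * ((U r)⁻¹ : Rˣ) := by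
      rw [sub_mul, h1]; push_cast; ring
    rw [he]
    exact Ideal.mul_mem_right _ _ (hsep₂ _)
  -- multiplicativity of sep on units
  have sepmul : ∀ r r' : Rˣ, sep ((r : R) * (r' : R)) = sep (r : R) * sep (r' : R) := by
    intro r r'
    apply uniq
    · exact S.mul_mem (hsep₁ _) (hsep₁ _)
    · have he : (r : R) * (r' : R) - sep (r : R) * sep (r' : R) =
          (r : R) * ((r' : R) - sep (r' : R)) + sep (r' : R) * ((r : R) - sep (r : R)) := by
        ring
      rw [he]
      exact Ideal.add_mem _ (Ideal.mul_mem_left _ _ (hsep₂ _)) (Ideal.mul_mem_left _ _ (hsep₂ _))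
  have sepone : sep (1 : R) = 1 := uniq 1 1 S.one_mem (by simpa using Ideal.zero_mem _)
  have hUmul : ∀ r r' : Rˣ, U (r * r') = U r * U r' := by
    intro r r'
    apply Units.ext
    rw [Units.val_mul, hU, hU, hU, Units.val_mul, sepmul]
  have hUone : U 1 = 1 := Units.ext (by rw [hU]; simpa using sepone)
  have hTmul : ∀ r r' : Rˣ, T (r * r') = T r * T r' := by
    intro r r'
    apply Units.ext
    apply Subtype.ext
    have : (((T r * T r' : Sˣ) : S) : R) = (((T r : Sˣ) : S) : R) * (((T r' : Sˣ) : S) : R) := by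
      push_cast; rfl
    show (((T (r * r') : Sˣ) : S) : R) = (((T r * T r' : Sˣ) : S) : R)
    rw [hT, this, hT, hT, Units.val_mul, sepmul]
  have hTone : T 1 = 1 := Units.ext (Subtype.ext (by rw [hT]; simpa using sepone))
  let f : Rˣ →* N × Sˣ :=
  { toFun := fun r => (⟨r * (U r)⁻¹, hmemN r⟩, T r)
    map_one' := by
      refine Prod.ext (Subtype.ext ?_) hTone
      simp [hUone]
    map_mul' := by
      intro r r'
      refine Prod.ext (Subtype.ext ?_) (hTmul r r')
      show (r * r') * (U (r * r'))⁻¹ = (r * (U r)⁻¹) * (r' * (U r')⁻¹)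
      rw [hUmul, mul_inv]
      exact mul_mul_mul_comm r r' (U r)⁻¹ (U r')⁻¹ }
  have hbij : Function.Bijective f := by
    constructor
    · intro r r' h
      have h2 : T r = T r' := congrArg Prod.snd h
      have hsepeq : sep (r : R) = sep (r' : R) := by rw [← hT r, ← hT r', h2]
      have hUeq : U r = U r' := Units.ext (by rw [hU, hU, hsepeq])
      have h1 : r * (U r)⁻¹ = r' * (U r')⁻¹ := Subtype.ext_iff.mp (congrArg Prod.fst h)
      rw [hUeq] at h1
      exact mul_right_cancel h1
    · rintro ⟨n, t⟩
      set v : Rˣ := Units.map (S.val.toRingHom.toMonoidHom) t with hvdef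
      have hv : (v : R) = ((t : S) : R) := rfl
      refine ⟨(n : Rˣ) * v, ?_⟩
      have hsepr : sep (((n : Rˣ) * v : Rˣ) : R) = ((t : S) : R) := by
        apply uniq _ _ (t : S).2
        have he : (((n : Rˣ) * v : Rˣ) : R) - ((t : S) : R)
            = (((n : Rˣ) : R) - 1) * ((t : S) : R) := by
          push_cast [hv]; ring
        rw [he]
        exact Ideal.mul_mem_right _ _ ((hN n).mp n.2)
      have hUr : U ((n : Rˣ) * v) = v := Units.ext (by rw [hU, hsepr, hv])
      refine Prod.ext (Subtype.ext ?_) ?_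
      · show ((n : Rˣ) * v) * (U ((n : Rˣ) * v))⁻¹ = (n : Rˣ)
        rw [hUr, mul_inv_cancel_right]
      · show T ((n : Rˣ) * v) = t
        exact Units.ext (Subtype.ext (by rw [hT, hsepr]))
  refine ⟨MulEquiv.ofBijective f hbij, ?_⟩
  intro r
  constructor
  · exact hT r
  · show ((r * (U r)⁻¹ : Rˣ) : R) * sep (r : R) = (r : R)
    rw [← hU r]
    push_cast
    rw [mul_assoc]
    rw [← Units.val_mul, inv_mul_cancel]
    simp
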